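/- Let r_L(φ) = (1/φ)(φ(cot(πφ) - i) - 1/π). Then along any strictly vertical curve through 0 (intersecting horizontal lines at angles in (δ₁, π - δ₁)): |r_L(φ)| ≤ C, and |r_L'(φ)| ≤ C for |Im φ| ≤ 1 while |r_L'(φ)| ≤ C(e^{-2π|Im φ|} + |Im φ|^{-2}) for |Im φ| ≥ 1, with C depending only on δ₁. -/

import Mathlib

open Real

open Complex Finset Filter

set_option maxHeartbeats 2000000

/-- The regular part `r_L(φ) = (1/φ)(φ(cot(πφ) - i) - 1/π)` of the kernel of `L₊`. -/
noncomputable def rL (φ : ℂ) : ℂ :=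
  (1 / φ) * (φ * (Complex.cos ((π : ℂ) * φ) / Complex.sin ((π : ℂ) * φ) - Complex.I)
    - 1 / (π : ℂ))

lemma pi_c_ne : ((π : ℂ)) ≠ 0 := by exact_mod_cast Real.pi_ne_zero

lemma rL_eq {φ : ℂ} (h : φ ≠ 0) :
    rL φ = Complex.cos ((π:ℂ)*φ) / Complex.sin ((π:ℂ)*φ) - Complex.I - 1/((π:ℂ)*φ) := by
  unfold rL
  set A := Complex.cos ((π:ℂ)*φ) / Complex.sin ((π:ℂ)*φ) with hA
  field_simp

lemma rL_zero : rL 0 = 0 := by simp [rL]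

lemma hasDerivAt_rL {φ : ℂ} (h : φ ≠ 0) (hs : Complex.sin ((π:ℂ)*φ) ≠ 0) :
    HasDerivAt rL (-(π:ℂ)/Complex.sin ((π:ℂ)*φ)^2 + 1/((π:ℂ)*φ^2)) φ := by
  have hlin : HasDerivAt (fun ψ : ℂ => (π:ℂ)*ψ) (π:ℂ) φ := by
    simpa using (hasDerivAt_id φ).const_mul (π:ℂ)
  have hcos : HasDerivAt (fun ψ : ℂ => Complex.cos ((π:ℂ)*ψ))
      (-Complex.sin ((π:ℂ)*φ) * (π:ℂ)) φ :=
    (Complex.hasDerivAt_cos ((π:ℂ)*φ)).comp φ hlin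
  have hsin : HasDerivAt (fun ψ : ℂ => Complex.sin ((π:ℂ)*ψ))
      (Complex.cos ((π:ℂ)*φ) * (π:ℂ)) φ :=
    (Complex.hasDerivAt_sin ((π:ℂ)*φ)).comp φ hlin
  have hdiv := hcos.div hsin hs
  have hinv : HasDerivAt (fun ψ : ℂ => 1/((π:ℂ)*ψ)) (-(((π:ℂ)*φ)^2)⁻¹ * (π:ℂ)) φ := by
    have h0 := (hasDerivAt_inv (mul_ne_zero pi_c_ne h)).comp φ hlin
    have e : (fun ψ : ℂ => 1/((π:ℂ)*ψ)) = ((fun y : ℂ => y⁻¹) ∘ fun ψ : ℂ => (π:ℂ)*ψ) := by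
      funext ψ; simp [Function.comp, one_div]
    rw [e]
    convert h0 using 1
  have hf := (hdiv.sub_const Complex.I).sub hinv
  have heq : rL =ᶠ[nhds φ] fun ψ =>
      Complex.cos ((π:ℂ)*ψ) / Complex.sin ((π:ℂ)*ψ) - Complex.I - 1/((π:ℂ)*ψ) := by
    filter_upwards [eventually_ne_nhds h] with ψ hψ
    exact rL_eq hψ
  have hfinal := hf.congr_of_eventuallyEq heq
  refine hfinal.congr_deriv ?_
  have pyth := Complex.sin_sq_add_cos_sq ((π:ℂ)*φ)
  have hnum : (-Complex.sin ((π:ℂ)*φ) * (π:ℂ)) * Complex.sin ((π:ℂ)*φ)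
      - Complex.cos ((π:ℂ)*φ) * (Complex.cos ((π:ℂ)*φ) * (π:ℂ)) = -(π:ℂ) := by
    linear_combination (-(π:ℂ)) * pyth
  rw [hnum]
  have e2 : -(((π:ℂ)*φ)^2)⁻¹ * (π:ℂ) = -(1/((π:ℂ)*φ^2)) := by
    rw [mul_pow]
    field_simp
  rw [e2]
  ring

noncomputable def Complex.abs : AbsoluteValue ℂ ℝ := NormedField.toAbsoluteValue ℂ

namespace Complex

theorem norm_eq_abs (z : ℂ) : ‖z‖ = Complex.abs z := rfl

@[simp] theorem abs_I : Complex.abs I = 1 := show ‖I‖ = 1 by simp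

@[simp] theorem abs_two : Complex.abs 2 = 2 := show ‖(2:ℂ)‖ = 2 by simp

@[simp] theorem abs_ofReal (r : ℝ) : Complex.abs (r : ℂ) = |r| := show ‖(r:ℂ)‖ = |r| by simp

theorem abs_exp (z : ℂ) : Complex.abs (exp z) = Real.exp z.re := norm_exp z

theorem abs_le_abs_re_add_abs_im (z : ℂ) : Complex.abs z ≤ |z.re| + |z.im| :=
  norm_le_abs_re_add_abs_im z

theorem abs_im_le_abs (z : ℂ) : |z.im| ≤ Complex.abs z := abs_im_le_norm z

theorem abs_exp_sub_one_sub_id_le {x : ℂ} (hx : Complex.abs x ≤ 1) :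
    Complex.abs (exp x - 1 - x) ≤ Complex.abs x ^ 2 :=
  norm_exp_sub_one_sub_id_le hx

@[continuity] theorem continuous_abs_fn : Continuous Complex.abs := continuous_norm

end Complex

lemma my_sin_sub (z : ℂ) (hz : Complex.abs z ≤ 1) :
    Complex.abs (Complex.sin z - z) ≤ 2/9 * Complex.abs z ^ 3 := by
  have hz1 : Complex.abs (-z * Complex.I) ≤ 1 := by simpa using hz
  have hz2 : Complex.abs (z * Complex.I) ≤ 1 := by simpa using hz
  have e : Complex.sin z - z =
      ((Complex.exp (-z * Complex.I) - ∑ m ∈ range 3, (-z * Complex.I) ^ m / m.factorial)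
       - (Complex.exp (z * Complex.I) - ∑ m ∈ range 3, (z * Complex.I) ^ m / m.factorial))
        * Complex.I / 2 := by
    simp [Complex.sin, Finset.sum_range_succ, Nat.factorial]
    linear_combination (-z) * Complex.I_sq
  have b1 := Complex.exp_bound hz1 (n := 3) (by norm_num)
  have b2 := Complex.exp_bound hz2 (n := 3) (by norm_num)
  simp only [Complex.norm_eq_abs] at b1 b2
  simp only [map_neg_eq_map, Complex.abs.map_mul, Complex.abs_I, mul_one] at b1 b2
  rw [e, map_div₀, Complex.abs.map_mul, Complex.abs_I, mul_one, Complex.abs_two]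
  have tri := Complex.abs.sub_le_add
    (Complex.exp (-z * Complex.I) - ∑ m ∈ range 3, (-z * Complex.I) ^ m / (m.factorial : ℂ))
    (Complex.exp (z * Complex.I) - ∑ m ∈ range 3, (z * Complex.I) ^ m / (m.factorial : ℂ))
  norm_num [Nat.factorial] at b1 b2
  simp only [neg_mul] at tri ⊢
  nlinarith [Complex.abs.nonneg z]

lemma my_cos_sub_one (z : ℂ) (hz : Complex.abs z ≤ 1) :
    Complex.abs (Complex.cos z - 1) ≤ Complex.abs z ^ 2 := by
  have hz1 : Complex.abs (-z * Complex.I) ≤ 1 := by simpa using hz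
  have hz2 : Complex.abs (z * Complex.I) ≤ 1 := by simpa using hz
  have e : Complex.cos z - 1 =
      ((Complex.exp (z * Complex.I) - 1 - z * Complex.I)
       + (Complex.exp (-z * Complex.I) - 1 - (-z * Complex.I))) / 2 := by
    simp [Complex.cos]; ring
  have b1 := Complex.abs_exp_sub_one_sub_id_le hz2
  have b2 := Complex.abs_exp_sub_one_sub_id_le hz1
  simp only [map_neg_eq_map, Complex.abs.map_mul, Complex.abs_I, mul_one] at b1 b2
  rw [e, map_div₀, Complex.abs_two]
  have tri := Complex.abs.add_le
    (Complex.exp (z * Complex.I) - 1 - z * Complex.I)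
    (Complex.exp (-z * Complex.I) - 1 - (-z * Complex.I))
  nlinarith [Complex.abs.nonneg z]

lemma my_sin_lb (z : ℂ) (hz : Complex.abs z ≤ 1) :
    Complex.abs z / 2 ≤ Complex.abs (Complex.sin z) := by
  have h := my_sin_sub z hz
  have tri : Complex.abs z ≤ Complex.abs (Complex.sin z) + Complex.abs (Complex.sin z - z) := by
    have := Complex.abs.sub_le_add (Complex.sin z) (Complex.sin z - z)
    simpa using this
  have h3 : Complex.abs z ^ 3 ≤ Complex.abs z := by
    nlinarith [mul_nonneg (mul_nonneg (Complex.abs.nonneg z) (sub_nonneg.2 hz))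
      (by positivity : (0:ℝ) ≤ 1 + Complex.abs z)]
  linarith [Complex.abs.nonneg z]

lemma my_sinh_le_sin (z : ℂ) : Real.sinh |z.im| ≤ Complex.abs (Complex.sin z) := by
  have e : Complex.sin z = (Complex.exp (-z * Complex.I) - Complex.exp (z * Complex.I)) * Complex.I / 2 := rfl
  rw [e, map_div₀, Complex.abs.map_mul, Complex.abs_I, mul_one, Complex.abs_two]
  have h1 : Complex.abs (Complex.exp (-z * Complex.I)) = Real.exp z.im := by
    rw [Complex.abs_exp]; congr 1; simp
  have h2 : Complex.abs (Complex.exp (z * Complex.I)) = Real.exp (-z.im) := by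
    rw [Complex.abs_exp]; congr 1; simp
  have tri : |Complex.abs (Complex.exp (-z * Complex.I)) - Complex.abs (Complex.exp (z * Complex.I))|
      ≤ Complex.abs (Complex.exp (-z * Complex.I) - Complex.exp (z * Complex.I)) :=
    Complex.abs.abs_abv_sub_le_abv_sub _ _
  rw [h1, h2] at tri
  have hid : Real.sinh |z.im| = |Real.exp z.im - Real.exp (-z.im)| / 2 := by
    rcases le_total 0 z.im with h | h
    · rw [_root_.abs_of_nonneg h, Real.sinh_eq,
        _root_.abs_of_nonneg (sub_nonneg.2 (Real.exp_le_exp.2 (neg_le_self h)))]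
    · rw [_root_.abs_of_nonpos h, Real.sinh_eq, neg_neg,
        _root_.abs_of_nonpos (sub_nonpos.2 (Real.exp_le_exp.2 (le_neg_self_iff.2 h)))]
      ring
  rw [hid]
  linarith

lemma my_cos_ub (z : ℂ) : Complex.abs (Complex.cos z) ≤ Real.cosh z.im := by
  have e : Complex.cos z = (Complex.exp (z * Complex.I) + Complex.exp (-z * Complex.I)) / 2 := rfl
  rw [e, map_div₀, Complex.abs_two, Real.cosh_eq]
  have h1 : Complex.abs (Complex.exp (-z * Complex.I)) = Real.exp z.im := by
    rw [Complex.abs_exp]; congr 1; simp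
  have h2 : Complex.abs (Complex.exp (z * Complex.I)) = Real.exp (-z.im) := by
    rw [Complex.abs_exp]; congr 1; simp
  have tri := Complex.abs.add_le (Complex.exp (z * Complex.I)) (Complex.exp (-z * Complex.I))
  rw [h1, h2] at tri
  linarith

lemma sin_ne_zero_of_small {u : ℂ} (hu : u ≠ 0) (h1 : Complex.abs u ≤ 1) :
    Complex.sin u ≠ 0 := by
  intro hs
  have := my_sin_lb u h1
  rw [hs] at this
  simp at this
  have : Complex.abs u > 0 := by
    simpa [Complex.abs.pos_iff] using hu
  linarith

lemma rL_near_zero {φ : ℂ} (h0 : φ ≠ 0) (h1 : Complex.abs ((π:ℂ)*φ) ≤ 1) :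
    Complex.abs (rL φ + Complex.I) ≤ 22/9 * Complex.abs ((π:ℂ)*φ) := by
  set u := (π:ℂ)*φ with hu
  have hu0 : u ≠ 0 := mul_ne_zero pi_c_ne h0
  have hs0 : Complex.sin u ≠ 0 := sin_ne_zero_of_small hu0 h1
  have e : rL φ + Complex.I = (u * Complex.cos u - Complex.sin u) / (u * Complex.sin u) := by
    rw [rL_eq h0, ← hu]
    field_simp
    ring
  set a := Complex.abs u with ha
  have ha0 : 0 < a := Complex.abs.pos hu0
  have hnum : Complex.abs (u * Complex.cos u - Complex.sin u) ≤ 11/9 * a^3 := by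
    have e2 : u * Complex.cos u - Complex.sin u
        = u * (Complex.cos u - 1) + -(Complex.sin u - u) := by ring
    rw [e2]
    have t1 := my_cos_sub_one u h1
    have t2 := my_sin_sub u h1
    calc Complex.abs (u * (Complex.cos u - 1) + -(Complex.sin u - u))
        ≤ Complex.abs (u * (Complex.cos u - 1)) + Complex.abs (-(Complex.sin u - u)) :=
          Complex.abs.add_le _ _
      _ = a * Complex.abs (Complex.cos u - 1) + Complex.abs (Complex.sin u - u) := by
          rw [Complex.abs.map_mul, Complex.abs.map_neg]
      _ ≤ a * a^2 + 2/9 * a^3 := by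
          have := mul_le_mul_of_nonneg_left t1 (le_of_lt ha0)
          linarith
      _ = 11/9 * a^3 := by ring
  have hden : a * (a/2) ≤ Complex.abs (u * Complex.sin u) := by
    rw [Complex.abs.map_mul]
    exact mul_le_mul_of_nonneg_left (my_sin_lb u h1) (le_of_lt ha0)
  rw [e, map_div₀]
  have hdpos : 0 < a * (a/2) := by positivity
  calc Complex.abs (u * Complex.cos u - Complex.sin u) / Complex.abs (u * Complex.sin u)
      ≤ (11/9 * a^3) / (a * (a/2)) := by
        apply div_le_div₀ (by positivity) hnum hdpos hden
    _ = 22/9 * a := by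
        field_simp
        ring
  
lemma deriv_rL_zero : deriv rL 0 = 0 := by
  apply deriv_zero_of_not_differentiableAt
  intro hdiff
  have hc : ContinuousAt rL 0 := hdiff.continuousAt
  have h1 : Tendsto rL (nhdsWithin (0:ℂ) {(0:ℂ)}ᶜ) (nhds 0) := by
    have := hc.tendsto
    rw [rL_zero] at this
    exact this.mono_left nhdsWithin_le_nhds
  have habs : Tendsto (fun φ : ℂ => 22/9 * Complex.abs ((π:ℂ)*φ))
      (nhdsWithin (0:ℂ) {(0:ℂ)}ᶜ) (nhds 0) := by
    have hcont : Continuous (fun φ : ℂ => 22/9 * Complex.abs ((π:ℂ)*φ)) := by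
      continuity
    have := hcont.tendsto 0
    simp only [mul_zero, map_zero] at this
    exact this.mono_left nhdsWithin_le_nhds
  have hev : ∀ᶠ φ : ℂ in nhdsWithin (0:ℂ) {(0:ℂ)}ᶜ, Complex.abs ((π:ℂ)*φ) ≤ 1 := by
    have h2 : Tendsto (fun φ : ℂ => Complex.abs ((π:ℂ)*φ))
        (nhdsWithin (0:ℂ) {(0:ℂ)}ᶜ) (nhds 0) := by
      have hcont : Continuous (fun φ : ℂ => Complex.abs ((π:ℂ)*φ)) := by continuity
      have := hcont.tendsto 0
      simp only [mul_zero, map_zero] at this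
      exact this.mono_left nhdsWithin_le_nhds
    filter_upwards [h2.eventually_lt_const (by norm_num : (0:ℝ) < 1)] with φ hφ
    exact le_of_lt hφ
  have h2 : Tendsto rL (nhdsWithin (0:ℂ) {(0:ℂ)}ᶜ) (nhds (-Complex.I)) := by
    rw [tendsto_iff_norm_sub_tendsto_zero]
    refine squeeze_zero' (Eventually.of_forall fun φ => norm_nonneg _) ?_ habs
    filter_upwards [hev, self_mem_nhdsWithin] with φ hφ1 hφ2
    have hne : φ ≠ 0 := hφ2
    have := rL_near_zero hne hφ1
    rw [sub_neg_eq_add]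
    simpa [Complex.norm_eq_abs] using this
  have := tendsto_nhds_unique h1 h2
  exact Complex.I_ne_zero (neg_eq_zero.mp this.symm)

/-- Along any strictly vertical curve through `0` (modelled by the cone
`tan δ₁ · |Re φ| ≤ |Im φ|`): `|r_L(φ)| ≤ C`, and `|r_L'(φ)| ≤ C` for `|Im φ| ≤ 1` while
`|r_L'(φ)| ≤ C(e^{-2π|Im φ|} + |Im φ|⁻²)` for `|Im φ| ≥ 1`, with `C = C(δ₁)`. -/
theorem stmt10 (δ₁ : ℝ) (hδ₁ : 0 < δ₁) (hδ₁' : δ₁ < π / 2) :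
    ∃ C : ℝ, 0 < C ∧ ∀ φ : ℂ, Real.tan δ₁ * |φ.re| ≤ |φ.im| →
      ‖rL φ‖ ≤ C ∧
      (|φ.im| ≤ 1 → ‖deriv rL φ‖ ≤ C) ∧
      (1 ≤ |φ.im| →
        ‖deriv rL φ‖ ≤ C * (Real.exp (-(2 * π * |φ.im|)) + 1 / |φ.im| ^ 2)) := by
  have hπ : (0:ℝ) < π := Real.pi_pos
  have hπ1 : (1:ℝ) < π := by linarith [Real.pi_gt_three]
  have hπ3 : (3:ℝ) < π := Real.pi_gt_three
  have htδ : 0 < Real.tan δ₁ := Real.tan_pos_of_pos_of_lt_pi_div_two hδ₁ hδ₁'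
  set κ : ℝ := 1/Real.tan δ₁ + 1 with hκdef
  have hκ : 0 < κ := by positivity
  have hκ1 : 1 ≤ κ := by
    have : 0 < 1/Real.tan δ₁ := by positivity
    simp only [hκdef]; linarith
  set m : ℝ := 1/(π*κ) with hmdef
  have hm : 0 < m := by positivity
  have hm1 : m < 1 := by
    rw [hmdef, div_lt_one (by positivity)]
    nlinarith
  have hπκm : π * (κ * m) = 1 := by
    rw [hmdef]
    field_simp
  have hsinh : 0 < Real.sinh (π*m) := Real.sinh_pos_iff.mpr (by positivity)
  set C : ℝ := 17 + (2 + 1/Real.sinh (π*m) + 1/(π*m)) + (π/Real.sinh (π*m)^2 + 1/(π*m^2))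
      + 16*π + 1/π with hCdef
  have hterm1 : 0 < 2 + 1/Real.sinh (π*m) + 1/(π*m) := by positivity
  have hterm2 : 0 < π/Real.sinh (π*m)^2 + 1/(π*m^2) := by positivity
  have hπinv : 0 < 1/π := by positivity
  have hC17 : (17:ℝ) ≤ C := by rw [hCdef]; nlinarith
  have hCterm1 : 2 + 1/Real.sinh (π*m) + 1/(π*m) ≤ C := by rw [hCdef]; nlinarith
  have hCterm2 : π/Real.sinh (π*m)^2 + 1/(π*m^2) ≤ C := by rw [hCdef]; nlinarith
  have hC16π : 16*π ≤ C := by rw [hCdef]; nlinarith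
  have hCπinv : 1/π ≤ C := by rw [hCdef]; nlinarith
  clear_value κ m C
  refine ⟨C, by linarith, fun φ hφ => ?_⟩
  by_cases hφ0 : φ = 0
  · subst hφ0
    refine ⟨?_, fun _ => ?_, fun h1 => ?_⟩
    · rw [rL_zero]; simp; linarith
    · rw [deriv_rL_zero]; simp; linarith
    · simp at h1; linarith
  · have him : φ.im ≠ 0 := by
      intro h
      apply hφ0
      have h1 : |φ.re| ≤ 0 := by
        rw [h] at hφ; simp at hφ
        nlinarith [abs_nonneg φ.re]
      have h2 : φ.re = 0 := _root_.abs_nonpos_iff.mp h1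
      exact Complex.ext h2 h
    obtain ⟨y, hydef⟩ : ∃ t : ℝ, t = |φ.im| := ⟨|φ.im|, rfl⟩
    rw [← hydef] at hφ ⊢
    have hy : 0 < y := by rw [hydef]; exact _root_.abs_pos.mpr him
    have habsφ_le : Complex.abs φ ≤ κ * y := by
      have h1 : |φ.re| ≤ y / Real.tan δ₁ := by
        rw [le_div_iff₀ htδ, mul_comm]
        exact hφ
      have h2 : Complex.abs φ ≤ |φ.re| + y := by
        rw [hydef]
        exact Complex.abs_le_abs_re_add_abs_im φ
      have h3 : κ * y = y / Real.tan δ₁ + y := by rw [hκdef]; ring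
      linarith
    have habsφ_ge : y ≤ Complex.abs φ := by
      rw [hydef]; exact Complex.abs_im_le_abs φ
    have habsφ_pos : 0 < Complex.abs φ := Complex.abs.pos hφ0
    have hu_im : ((π:ℂ)*φ).im = π * φ.im := by simp [Complex.mul_im]
    have habs_u : Complex.abs ((π:ℂ)*φ) = π * Complex.abs φ := by
      rw [map_mul, Complex.abs_ofReal, _root_.abs_of_pos hπ]
    have hsinh_y : Real.sinh (π*y) ≤ Complex.abs (Complex.sin ((π:ℂ)*φ)) := by
      have h0 := my_sinh_le_sin ((π:ℂ)*φ)
      rwa [hu_im, abs_mul, _root_.abs_of_pos hπ, ← hydef] at h0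
    by_cases hsm : y ≤ m
    · -- SMALL region
      have hu1 : Complex.abs ((π:ℂ)*φ) ≤ 1 := by
        rw [habs_u, ← hπκm]
        have s1 : κ * y ≤ κ * m := mul_le_mul_of_nonneg_left hsm (le_of_lt hκ)
        have s2 : Complex.abs φ ≤ κ * m := le_trans habsφ_le s1
        exact mul_le_mul_of_nonneg_left s2 (le_of_lt hπ)
      have hs0 : Complex.sin ((π:ℂ)*φ) ≠ 0 :=
        sin_ne_zero_of_small (mul_ne_zero pi_c_ne hφ0) hu1
      refine ⟨?_, fun _ => ?_, fun h1 => by linarith⟩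
      · have h1 := rL_near_zero hφ0 hu1
        have h2 : Complex.abs (rL φ) ≤ Complex.abs (rL φ + Complex.I) + 1 := by
          have := Complex.abs.sub_le_add (rL φ + Complex.I) Complex.I
          simpa using this
        rw [Complex.norm_eq_abs]
        linarith [Complex.abs.nonneg ((π:ℂ)*φ)]
      · rw [(hasDerivAt_rL hφ0 hs0).deriv]
        set u := (π:ℂ)*φ with hudef
        set s := Complex.sin u with hsdef
        have hu0 : u ≠ 0 := mul_ne_zero pi_c_ne hφ0
        have hs2 : s^2 ≠ 0 := pow_ne_zero 2 hs0
        have hu2 : u^2 ≠ 0 := pow_ne_zero 2 hu0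
        have k1 : 1/((π:ℂ)*φ^2) = (π:ℂ)/u^2 := by
          rw [hudef, mul_pow, div_eq_div_iff (mul_ne_zero pi_c_ne (pow_ne_zero 2 hφ0))
            (mul_ne_zero (pow_ne_zero 2 pi_c_ne) (pow_ne_zero 2 hφ0))]
          ring
        have e3 : -(π:ℂ)/s^2 + 1/((π:ℂ)*φ^2)
            = (π:ℂ) * ((s - u)*(s + u)) / (s^2 * u^2) := by
          rw [k1, div_add_div _ _ hs2 hu2]
          have knum : -(π:ℂ) * u^2 + s^2 * (π:ℂ) = (π:ℂ) * ((s - u)*(s + u)) := by ring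
          rw [knum]
        rw [Complex.norm_eq_abs, e3]
        have ha0 : 0 < Complex.abs u := Complex.abs.pos (mul_ne_zero pi_c_ne hφ0)
        have ha0' : (0:ℝ) ≤ Complex.abs u := le_of_lt ha0
        have ha1 : Complex.abs u ≤ 1 := hu1
        have ha3 : Complex.abs u^3 ≤ Complex.abs u := by
          have hcube := mul_nonneg (mul_nonneg ha0' (sub_nonneg.2 ha1))
            (by linarith : (0:ℝ) ≤ 1 + Complex.abs u)
          nlinarith only [hcube]
        have hsu1 : Complex.abs (s - u) ≤ 2/9 * Complex.abs u^3 := my_sin_sub u hu1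
        have hsu2 : Complex.abs (s + u) ≤ 20/9 * Complex.abs u := by
          have e4 : s + u = (s - u) + 2*u := by ring
          rw [e4]
          have t5 := Complex.abs.add_le (s - u) (2*u)
          have h2u : Complex.abs (2*u) = 2*Complex.abs u := by
            rw [map_mul, Complex.abs_two]
          linarith
        have hslb : Complex.abs u/2 ≤ Complex.abs s := my_sin_lb u hu1
        have hnum : Complex.abs ((π:ℂ) * ((s - u)*(s + u))) ≤ π * (40/81 * Complex.abs u^4) := by
          rw [map_mul, map_mul, Complex.abs_ofReal, _root_.abs_of_pos hπ]
          have hmm : Complex.abs (s - u) * Complex.abs (s + u)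
              ≤ (2/9 * Complex.abs u^3) * (20/9 * Complex.abs u) :=
            mul_le_mul hsu1 hsu2 (Complex.abs.nonneg _) (by positivity)
          have : (2/9 * Complex.abs u^3) * (20/9 * Complex.abs u) = 40/81 * Complex.abs u^4 := by
            ring
          rw [this] at hmm
          exact mul_le_mul_of_nonneg_left hmm (le_of_lt hπ)
        have hden : Complex.abs u^4/4 ≤ Complex.abs (s^2 * u^2) := by
          have hsplit : Complex.abs (s^2 * u^2) = Complex.abs s^2 * Complex.abs u^2 := by
            rw [map_mul, map_pow, map_pow]
          rw [hsplit]
          have hq : (Complex.abs u/2)^2 * Complex.abs u^2 ≤ Complex.abs s^2 * Complex.abs u^2 :=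
            mul_le_mul_of_nonneg_right (pow_le_pow_left₀ (by linarith) hslb 2) (sq_nonneg _)
          calc Complex.abs u^4/4 = (Complex.abs u/2)^2 * Complex.abs u^2 := by ring
            _ ≤ Complex.abs s^2 * Complex.abs u^2 := hq
        rw [map_div₀]
        have hden_pos : (0:ℝ) < Complex.abs u^4/4 := by positivity
        calc Complex.abs ((π:ℂ) * ((s - u)*(s + u))) / Complex.abs (s^2 * u^2)
            ≤ (π * (40/81 * Complex.abs u^4)) / (Complex.abs u^4/4) := by
              apply div_le_div₀ (by positivity) hnum hden_pos hden
          _ = 160*π/81 := by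
              rw [div_eq_iff (ne_of_gt hden_pos)]
              ring
          _ ≤ C := by linarith
    · -- LARGE region
      have hmy : m ≤ y := le_of_not_ge hsm
      have hπm_le : π*m ≤ π*y := mul_le_mul_of_nonneg_left hmy (le_of_lt hπ)
      have hsinh_ypos : 0 < Real.sinh (π*y) := Real.sinh_pos_iff.mpr (mul_pos hπ hy)
      have hsinh_my : Real.sinh (π*m) ≤ Real.sinh (π*y) := Real.sinh_le_sinh.mpr hπm_le
      have hs0 : Complex.sin ((π:ℂ)*φ) ≠ 0 := by
        intro h; rw [h] at hsinh_y; simp only [map_zero] at hsinh_y; linarith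
      have habs_s_pos : 0 < Complex.abs (Complex.sin ((π:ℂ)*φ)) := Complex.abs.pos hs0
      have hrL : ‖rL φ‖ ≤ C := by
        rw [Complex.norm_eq_abs, rL_eq hφ0]
        have t1 : Complex.abs (Complex.cos ((π:ℂ)*φ) / Complex.sin ((π:ℂ)*φ)
              - Complex.I - 1/((π:ℂ)*φ))
            ≤ Complex.abs (Complex.cos ((π:ℂ)*φ)) / Complex.abs (Complex.sin ((π:ℂ)*φ))
              + 1 + 1/Complex.abs ((π:ℂ)*φ) := by
          have u1 := Complex.abs.sub_le_add (Complex.cos ((π:ℂ)*φ) / Complex.sin ((π:ℂ)*φ)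
            - Complex.I) (1/((π:ℂ)*φ))
          have u2 := Complex.abs.sub_le_add (Complex.cos ((π:ℂ)*φ) / Complex.sin ((π:ℂ)*φ))
            Complex.I
          rw [map_div₀] at u2
          have u3 : Complex.abs (1/((π:ℂ)*φ)) = 1/Complex.abs ((π:ℂ)*φ) := by
            rw [map_div₀, map_one]
          rw [u3] at u1
          simp only [Complex.abs_I] at u2
          linarith
        have t2 : Complex.abs (Complex.cos ((π:ℂ)*φ)) ≤ Real.sinh (π*y) + 1 := by
          have c1 := my_cos_ub ((π:ℂ)*φ)
          rw [hu_im] at c1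
          have c0 : |π*φ.im| = π*y := by
            rw [abs_mul, _root_.abs_of_pos hπ, ← hydef]
          have c2 : Real.cosh (π*φ.im) = Real.cosh (π*y) := by
            rw [← Real.cosh_abs, c0]
          have c3 : Real.cosh (π*y) ≤ Real.sinh (π*y) + 1 := by
            rw [Real.cosh_eq, Real.sinh_eq]
            have : Real.exp (-(π*y)) ≤ 1 := by
              rw [← Real.exp_zero]
              apply Real.exp_le_exp.mpr
              nlinarith only [mul_pos hπ hy]
            linarith
          linarith
        have t3 : Complex.abs (Complex.cos ((π:ℂ)*φ)) / Complex.abs (Complex.sin ((π:ℂ)*φ))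
            ≤ 1 + 1/Real.sinh (π*m) := by
          calc Complex.abs (Complex.cos ((π:ℂ)*φ)) / Complex.abs (Complex.sin ((π:ℂ)*φ))
              ≤ (Real.sinh (π*y) + 1) / Real.sinh (π*y) := by
                apply div_le_div₀ (by linarith) t2 hsinh_ypos hsinh_y
            _ = 1 + 1/Real.sinh (π*y) := by field_simp
            _ ≤ 1 + 1/Real.sinh (π*m) := by
                have := one_div_le_one_div_of_le hsinh hsinh_my
                linarith
        have t4 : 1/Complex.abs ((π:ℂ)*φ) ≤ 1/(π*m) := by
          apply one_div_le_one_div_of_le (mul_pos hπ hm)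
          rw [habs_u]
          calc π*m ≤ π*y := hπm_le
            _ ≤ π*Complex.abs φ := mul_le_mul_of_nonneg_left habsφ_ge (le_of_lt hπ)
        linarith
      have hD := (hasDerivAt_rL hφ0 hs0).deriv
      have td : Complex.abs (-(π:ℂ)/Complex.sin ((π:ℂ)*φ)^2 + 1/((π:ℂ)*φ^2))
          ≤ π/(Complex.abs (Complex.sin ((π:ℂ)*φ)))^2 + 1/(π*(Complex.abs φ)^2) := by
        have u1 := Complex.abs.add_le (-(π:ℂ)/Complex.sin ((π:ℂ)*φ)^2) (1/((π:ℂ)*φ^2))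
        have u2 : Complex.abs (-(π:ℂ)/Complex.sin ((π:ℂ)*φ)^2)
            = π/(Complex.abs (Complex.sin ((π:ℂ)*φ)))^2 := by
          rw [map_div₀, Complex.abs.map_neg, Complex.abs_ofReal, _root_.abs_of_pos hπ, map_pow]
        have u3 : Complex.abs (1/((π:ℂ)*φ^2)) = 1/(π*(Complex.abs φ)^2) := by
          rw [map_div₀, map_one, map_mul, Complex.abs_ofReal, _root_.abs_of_pos hπ, map_pow]
        rw [u2, u3] at u1
        exact u1
      have td2 : π/(Complex.abs (Complex.sin ((π:ℂ)*φ)))^2 ≤ π/Real.sinh (π*y)^2 := by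
        apply div_le_div_of_nonneg_left (le_of_lt hπ) (pow_pos hsinh_ypos 2)
        exact pow_le_pow_left₀ (le_of_lt hsinh_ypos) hsinh_y 2
      have td3 : 1/(π*(Complex.abs φ)^2) ≤ 1/(π*y^2) := by
        apply one_div_le_one_div_of_le (mul_pos hπ (pow_pos hy 2))
        exact mul_le_mul_of_nonneg_left (pow_le_pow_left₀ (le_of_lt hy) habsφ_ge 2) (le_of_lt hπ)
      refine ⟨hrL, fun hy1 => ?_, fun hy1 => ?_⟩
      · rw [hD, Complex.norm_eq_abs]
        have e1 : π/Real.sinh (π*y)^2 ≤ π/Real.sinh (π*m)^2 := by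
          apply div_le_div_of_nonneg_left (le_of_lt hπ) (pow_pos hsinh 2)
          exact pow_le_pow_left₀ (le_of_lt hsinh) hsinh_my 2
        have e2 : 1/(π*y^2) ≤ 1/(π*m^2) := by
          apply one_div_le_one_div_of_le (mul_pos hπ (pow_pos hm 2))
          exact mul_le_mul_of_nonneg_left (pow_le_pow_left₀ (le_of_lt hm) hmy 2) (le_of_lt hπ)
        linarith
      · rw [hD, Complex.norm_eq_abs]
        have hπy3 : 3 ≤ π*y := by
          have := mul_le_mul (le_of_lt hπ3) hy1 zero_le_one (le_of_lt hπ)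
          linarith only [this]
        have hE : 4 ≤ Real.exp (π*y) := by
          linarith only [Real.add_one_le_exp (π*y), hπy3]
        have hEpos : 0 < Real.exp (π*y) := Real.exp_pos _
        have hEinv : (Real.exp (π*y))⁻¹ ≤ 1/4 := by
          have i1 : 0 ≤ (Real.exp (π*y))⁻¹ := by positivity
          have i2 : 4 * (Real.exp (π*y))⁻¹ ≤ Real.exp (π*y) * (Real.exp (π*y))⁻¹ :=
            mul_le_mul_of_nonneg_right hE i1
          rw [mul_inv_cancel₀ (ne_of_gt hEpos)] at i2
          linarith
        have hsinh_lb : Real.exp (π*y)/4 ≤ Real.sinh (π*y) := by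
          rw [Real.sinh_eq, Real.exp_neg]
          rw [div_le_div_iff₀ (by norm_num) (by norm_num)]
          linarith
        have hfrac : π/Real.sinh (π*y)^2 ≤ 16*π*Real.exp (-(2*π*y)) := by
          have f1 : (Real.exp (π*y)/4)^2 ≤ Real.sinh (π*y)^2 :=
            pow_le_pow_left₀ (by positivity) hsinh_lb 2
          have f2 : π/Real.sinh (π*y)^2 ≤ π/(Real.exp (π*y)/4)^2 :=
            div_le_div_of_nonneg_left (le_of_lt hπ) (by positivity) f1
          have hE2 : Real.exp (π*y)^2 = Real.exp (2*π*y) := by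
            rw [sq, ← Real.exp_add]; ring_nf
          have f3 : π/(Real.exp (π*y)/4)^2 = 16*π*Real.exp (-(2*π*y)) := by
            rw [Real.exp_neg, div_pow, hE2]
            field_simp
            ring
          linarith
        have hb2 : 1/(π*y^2) = (1/π)*(1/y^2) := by
          rw [one_div (π*y^2), mul_inv, one_div π, one_div (y^2)]
        have hexp0 : (0:ℝ) ≤ Real.exp (-(2*π*y)) := le_of_lt (Real.exp_pos _)
        have hy2 : (0:ℝ) ≤ 1/y^2 := by positivity
        have final : π/Real.sinh (π*y)^2 + 1/(π*y^2)
            ≤ C * (Real.exp (-(2*π*y)) + 1/y^2) := by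
          have hint1 := mul_nonneg (by linarith : (0:ℝ) ≤ C - 16*π) hexp0
          have hint2 := mul_nonneg (by linarith : (0:ℝ) ≤ C - 1/π) hy2
          nlinarith only [hint1, hint2, hfrac, hb2]
        calc Complex.abs (-(π:ℂ)/Complex.sin ((π:ℂ)*φ)^2 + 1/((π:ℂ)*φ^2))
            ≤ π/Real.sinh (π*y)^2 + 1/(π*y^2) := by linarith
          _ ≤ C * (Real.exp (-(2*π*y)) + 1/y^2) := final
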